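/- If v_1, ..., v_{d²} ∈ ℂ^d are unit vectors satisfying |⟨v_i, v_j⟩|² = 1/(d+1) for all i ≠ j, then P_d = ((d+1)/(2d)) · Σ_{j=1}^{d²} (v_j ⊗ v_j)(v_j ⊗ v_j)*, where v_j ⊗ v_j ∈ ℂ^d ⊗ ℂ^d is the tensor product vector and (v_j ⊗ v_j)(v_j ⊗ v_j)* is the corresponding rank-one matrix on ℂ^d ⊗ ℂ^d. -/

import Mathlib

open Matrix

/-- The rank-one matrix `w w'*` on `ℂ^d ⊗ ℂ^d`, with entries `w_p * conj (w'_q)`. -/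
noncomputable def outer2 {d : ℕ} (x y : Fin d × Fin d → ℂ) :
    Matrix (Fin d × Fin d) (Fin d × Fin d) ℂ :=
  fun p q => x p * (starRingEnd ℂ) (y q)

/-- The tensor product vector `x ⊗ y ∈ ℂ^d ⊗ ℂ^d`, identified with a function on pairs. -/
noncomputable def tensorVec {d : ℕ} (x y : Fin d → ℂ) : Fin d × Fin d → ℂ :=
  fun p => x p.1 * y p.2

/-- The orthogonal projection of `ℂ^d ⊗ ℂ^d` onto the symmetric subspace, determined by
`P_d (e_k ⊗ e_l) = (1/2)(e_k ⊗ e_l + e_l ⊗ e_k)`. -/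
noncomputable def symProj (d : ℕ) : Matrix (Fin d × Fin d) (Fin d × Fin d) ℂ :=
  fun p q => (if p = q then 1 else 0) / 2 + (if p = Prod.swap q then 1 else 0) / 2

lemma outer2_conjTranspose {d : ℕ} (x : Fin d × Fin d → ℂ) : (outer2 x x)ᴴ = outer2 x x := by
  ext p q; simp [outer2, conjTranspose_apply, mul_comm]

lemma swap_eq_comm {d : ℕ} (p q : Fin d × Fin d) : (q = Prod.swap p) ↔ (p = Prod.swap q) := by
  constructor <;> (rintro rfl; simp)

lemma symProj_symm {d : ℕ} (p q : Fin d × Fin d) : symProj d q p = symProj d p q := by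
  unfold symProj
  rw [if_congr (eq_comm) rfl rfl, if_congr (swap_eq_comm p q) rfl rfl]

lemma symProj_conjTranspose (d : ℕ) : (symProj d)ᴴ = symProj d := by
  ext p q
  rw [conjTranspose_apply, symProj_symm]
  simp [symProj, apply_ite]


lemma card_diag (d : ℕ) : ∑ p : Fin d × Fin d, (if p = Prod.swap p then (1:ℂ) else 0) = d := by
  rw [Fintype.sum_prod_type]
  simp [Prod.ext_iff, eq_comm]


lemma trace_symProj_sq (d : ℕ) : trace (symProj d * symProj d) = ((d:ℂ)^2 + d)/2 := by
  have key : ∀ p : Fin d × Fin d, ∑ q, symProj d p q * symProj d q p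
      = 1/2 + (if p = Prod.swap p then (1:ℂ) else 0)/2 := by
    intro p
    have hterm : ∀ q, symProj d p q * symProj d q p
        = (if q = p then (1:ℂ) else 0)/4 + (if q = Prod.swap p then 1 else 0)/4
          + (if q = p then (if p = Prod.swap p then (1:ℂ) else 0) else 0)/2 := by
      intro q
      unfold symProj
      by_cases h1 : q = p
      · subst h1
        by_cases h2 : q = Prod.swap q
        · rw [← h2]; simp; norm_num
        · simp [h2, (swap_eq_comm q q).not.mp h2]
          norm_num
      · by_cases h2 : q = Prod.swap p
        · subst h2
          have hne : ¬ p = Prod.swap p := fun h => h1 (by rw [← h])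
          have h3 : ¬ Prod.swap p = p := fun h => h1 h
          have h5 : ¬ Prod.swap p = Prod.swap (Prod.swap p) := by
            intro h; exact h3 (by simpa using h)
          simp [hne, h3, h5]
          norm_num
        · have h3 : ¬ p = q := fun h => h1 h.symm
          have h4 : ¬ p = Prod.swap q := fun h => h2 ((swap_eq_comm p q).mpr h)
          have h6 : ¬ Prod.swap q = p := fun h => h2 ((swap_eq_comm p q).mpr h.symm)
          simp [h1, h2, h3, h4, h6]
    rw [Finset.sum_congr rfl (fun q _ => hterm q)]
    rw [Finset.sum_add_distrib, Finset.sum_add_distrib, ← Finset.sum_div, ← Finset.sum_div,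
      ← Finset.sum_div]
    simp
    norm_num
  unfold trace
  simp only [diag_apply, Matrix.mul_apply]
  rw [Finset.sum_congr rfl (fun p _ => key p), Finset.sum_add_distrib, ← Finset.sum_div,
    ← Finset.sum_div, card_diag]
  simp [Finset.card_univ]
  ring

lemma trace_outer2_mul_outer2 {d : ℕ} (x y : Fin d × Fin d → ℂ) :
    trace (outer2 x x * outer2 y y)
      = (∑ p, (starRingEnd ℂ) (x p) * y p) * (∑ q, x q * (starRingEnd ℂ) (y q)) := by
  unfold trace outer2
  simp only [diag_apply, Matrix.mul_apply, Finset.sum_mul_sum]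
  rw [Finset.sum_comm]
  refine Finset.sum_congr rfl fun k _ => Finset.sum_congr rfl fun i _ => ?_
  ring

lemma sum_conj_tensorVec {d : ℕ} (x y : Fin d → ℂ) :
    ∑ p : Fin d × Fin d, (starRingEnd ℂ) (tensorVec x x p) * tensorVec y y p
      = (∑ a, (starRingEnd ℂ) (x a) * y a)^2 := by
  rw [Fintype.sum_prod_type, sq, Finset.sum_mul_sum]
  refine Finset.sum_congr rfl fun a _ => Finset.sum_congr rfl fun b _ => ?_
  simp [tensorVec]
  ring

lemma tensorVec_swap {d : ℕ} (x : Fin d → ℂ) (p : Fin d × Fin d) :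
    tensorVec x x (Prod.swap p) = tensorVec x x p := by
  simp [tensorVec, mul_comm]

lemma trace_symProj_mul_outer2 {d : ℕ} (x : Fin d → ℂ) :
    trace (symProj d * outer2 (tensorVec x x) (tensorVec x x))
      = ∑ p, tensorVec x x p * (starRingEnd ℂ) (tensorVec x x p) := by
  unfold trace symProj outer2
  simp only [diag_apply, Matrix.mul_apply]
  have key : ∀ p : Fin d × Fin d,
      (∑ q, ((if p = q then (1:ℂ) else 0)/2 + (if p = Prod.swap q then 1 else 0)/2)
        * (tensorVec x x q * (starRingEnd ℂ) (tensorVec x x p)))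
      = tensorVec x x p * (starRingEnd ℂ) (tensorVec x x p) := by
    intro p
    have hterm : ∀ q, ((if p = q then (1:ℂ) else 0)/2 + (if p = Prod.swap q then 1 else 0)/2)
        * (tensorVec x x q * (starRingEnd ℂ) (tensorVec x x p))
        = (if q = p then tensorVec x x q * (starRingEnd ℂ) (tensorVec x x p) / 2 else 0)
          + (if q = Prod.swap p then tensorVec x x q * (starRingEnd ℂ) (tensorVec x x p) / 2 else 0) := by
      intro q
      rw [if_congr (eq_comm) rfl rfl, (if_congr (swap_eq_comm q p) rfl rfl : (if p = Prod.swap q then (1:ℂ) else 0) = _)]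
      by_cases h1 : q = p <;> by_cases h2 : q = Prod.swap p <;> simp [h1, h2] <;> simp_all <;> ring
    rw [Finset.sum_congr rfl (fun q _ => hterm q), Finset.sum_add_distrib]
    simp only [Finset.sum_ite_eq', Finset.mem_univ, if_true]
    rw [tensorVec_swap]
    ring
  exact Finset.sum_congr rfl (fun p _ => key p)

/-- If `v_1, ..., v_{d²} ∈ ℂ^d` are unit vectors with `|⟨v_i, v_j⟩|² = 1/(d+1)` for `i ≠ j`,
then `P_d = ((d+1)/(2d)) ∑_j (v_j ⊗ v_j)(v_j ⊗ v_j)*`. -/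
theorem symProj_eq_sic_sum {d : ℕ} (hd : 2 ≤ d)
    (v : Fin (d ^ 2) → EuclideanSpace ℂ (Fin d))
    (hv : ∀ i, ‖v i‖ = 1)
    (hang : ∀ i j, i ≠ j → ‖(inner ℂ (v i) (v j) : ℂ)‖ ^ 2 = 1 / (d + 1)) :
    symProj d =
      (((d : ℂ) + 1) / (2 * d)) •
        ∑ j, outer2 (tensorVec (v j) (v j)) (tensorVec (v j) (v j)) := by
  have hd0 : (d:ℂ) ≠ 0 := Nat.cast_ne_zero.mpr (by omega)
  have hd1 : (d:ℂ) + 1 ≠ 0 := by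
    have : ((d+1 : ℕ) : ℂ) ≠ 0 := Nat.cast_ne_zero.mpr (by omega)
    push_cast at this; exact this
  set w : Fin (d^2) → (Fin d × Fin d → ℂ) := fun j => tensorVec (v j) (v j) with hw
  set T : Matrix (Fin d × Fin d) (Fin d × Fin d) ℂ := ∑ j, outer2 (w j) (w j) with hT
  set c : ℂ := ((d:ℂ)+1)/(2*(d:ℂ)) with hc
  show symProj d = c • T
  rw [← sub_eq_zero]
  set A : Matrix (Fin d × Fin d) (Fin d × Fin d) ℂ := symProj d - c • T with hA
  -- inner product facts
  have hip1 : ∀ j, ∑ a, (starRingEnd ℂ) (v j a) * v j a = 1 := by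
    intro j
    have h2 : (inner ℂ (v j) (v j) : ℂ) = 1 := by
      rw [inner_self_eq_norm_sq_to_K, hv j]; norm_num
    rw [← h2, PiLp.inner_apply]; refine Finset.sum_congr rfl fun a _ => ?_; simp only [RCLike.inner_apply]; ring
  have hip2 : ∀ i j, i ≠ j →
      (∑ a, (starRingEnd ℂ) (v i a) * v j a) *
        (starRingEnd ℂ) (∑ a, (starRingEnd ℂ) (v i a) * v j a) = 1/((d:ℂ)+1) := by
    intro i j hij
    have h1 : (inner ℂ (v i) (v j) : ℂ) = ∑ a, (starRingEnd ℂ) (v i a) * v j a := by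
      simp [PiLp.inner_apply, mul_comm]
    have h2 := hang i j hij
    have h3 : (inner ℂ (v i) (v j) : ℂ) * (starRingEnd ℂ) (inner ℂ (v i) (v j) : ℂ)
        = ((‖(inner ℂ (v i) (v j) : ℂ)‖^2 : ℝ) : ℂ) := by
      rw [Complex.mul_conj]; norm_cast; exact (Complex.sq_norm _).symm
    rw [← h1, h3, h2]
    push_cast
    ring
  -- trace values
  have htrace_oo : ∀ j k, trace (outer2 (w j) (w j) * outer2 (w k) (w k))
      = if j = k then 1 else (1/((d:ℂ)+1))^2 := by
    intro j k
    rw [trace_outer2_mul_outer2]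
    have e1 : ∑ p, (starRingEnd ℂ) (w j p) * w k p = (∑ a, (starRingEnd ℂ) (v j a) * v k a)^2 :=
      sum_conj_tensorVec _ _
    have e2 : ∑ q, w j q * (starRingEnd ℂ) (w k q)
        = (starRingEnd ℂ) (∑ p, (starRingEnd ℂ) (w j p) * w k p) := by
      rw [map_sum]
      refine Finset.sum_congr rfl fun p _ => ?_
      simp
    rw [e1, e2, e1, map_pow, ← mul_pow]
    by_cases h : j = k
    · subst h; rw [hip1]; simp
    · rw [if_neg h, hip2 j k h]
  have htrace_PT : trace (symProj d * T) = (d:ℂ)^2 := by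
    rw [hT, Finset.mul_sum, trace_sum]
    have h1 : ∀ j, trace (symProj d * outer2 (w j) (w j)) = 1 := by
      intro j
      rw [trace_symProj_mul_outer2]
      calc ∑ p, w j p * (starRingEnd ℂ) (w j p)
          = ∑ p, (starRingEnd ℂ) (w j p) * w j p := by
            refine Finset.sum_congr rfl fun p _ => mul_comm _ _
        _ = (∑ a, (starRingEnd ℂ) (v j a) * v j a)^2 := sum_conj_tensorVec _ _
        _ = 1 := by rw [hip1]; norm_num
    rw [Finset.sum_congr rfl (fun j _ => h1 j)]
    simp [Finset.card_univ]
    try push_cast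
    try ring
  have htrace_TT : trace (T * T)
      = (d:ℂ)^2 * (1 - (1/((d:ℂ)+1))^2) + ((d:ℂ)^2)^2 * (1/((d:ℂ)+1))^2 := by
    rw [hT, Finset.sum_mul, trace_sum]
    have h1 : ∀ j, trace (outer2 (w j) (w j) * ∑ k, outer2 (w k) (w k))
        = (1 - (1/((d:ℂ)+1))^2) + (d:ℂ)^2 * (1/((d:ℂ)+1))^2 := by
      intro j
      rw [Finset.mul_sum, trace_sum, Finset.sum_congr rfl (fun k _ => htrace_oo j k)]
      have h2 : ∀ k : Fin (d^2), (if j = k then (1:ℂ) else (1/((d:ℂ)+1))^2)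
          = (if j = k then 1 - (1/((d:ℂ)+1))^2 else 0) + (1/((d:ℂ)+1))^2 := by
        intro k; split_ifs <;> ring
      rw [Finset.sum_congr rfl (fun k _ => h2 k), Finset.sum_add_distrib,
        Finset.sum_ite_eq, if_pos (Finset.mem_univ j), Finset.sum_const, Finset.card_univ]
      simp
      try push_cast
      try ring
    rw [Finset.sum_congr rfl (fun j _ => h1 j), Finset.sum_const, Finset.card_univ]
    simp
    try push_cast
    try ring
  have hstar_c : star c = c := by
    show (starRingEnd ℂ) c = c
    rw [hc]
    simp [map_div₀, Complex.conj_ofNat]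
  have hTH : Tᴴ = T := by
    rw [hT, conjTranspose_sum]
    exact Finset.sum_congr rfl fun j _ => outer2_conjTranspose _
  have hAH : Aᴴ = symProj d - c • T := by
    rw [hA, conjTranspose_sub, conjTranspose_smul, symProj_conjTranspose, hstar_c, hTH]
  have hTr0 : trace (Aᴴ * A) = 0 := by
    rw [hAH, hA]
    simp only [sub_mul, mul_sub, Matrix.smul_mul, Matrix.mul_smul, trace_sub, trace_smul,
      smul_smul, smul_eq_mul]
    rw [trace_symProj_sq, htrace_PT, trace_mul_comm T (symProj d), htrace_PT, htrace_TT, hc]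
    field_simp
    ring
  -- conclude A = 0
  have hexp : trace (Aᴴ * A) = ∑ q, ∑ p, ((Complex.normSq (A p q) : ℝ) : ℂ) := by
    unfold trace
    simp only [diag_apply, Matrix.mul_apply, conjTranspose_apply]
    refine Finset.sum_congr rfl fun q _ => Finset.sum_congr rfl fun p _ => ?_
    rw [Complex.normSq_eq_conj_mul_self]
    simp [Complex.conj_mul']
  rw [hexp] at hTr0
  have hre : ∑ q : Fin d × Fin d, ∑ p : Fin d × Fin d, Complex.normSq (A p q) = 0 := by
    have := congrArg Complex.re hTr0
    simpa [Complex.ofReal_sum] using this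
  ext p q
  have h1 : Complex.normSq (A p q) = 0 := by
    have hq := (Finset.sum_eq_zero_iff_of_nonneg (fun q _ =>
      Finset.sum_nonneg (fun p _ => Complex.normSq_nonneg _))).mp hre q (Finset.mem_univ q)
    exact (Finset.sum_eq_zero_iff_of_nonneg (fun p _ => Complex.normSq_nonneg _)).mp hq p
      (Finset.mem_univ p)
  simpa using Complex.normSq_eq_zero.mp h1
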